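/- The genus of G_{a,b}(c) (the cardinality of ℕ \ G_{a,b}(c)) equals (1/c)·Σ_{l=1}^{c-1} x_l − (c−1)/2, where x_l = min{ x ∈ G_{a,b}(c) : x ≡ b·l (mod c) }. -/

import Mathlib

/-- `sF a k = Σ_{i=0}^{k-1} a^i` (so `sF a 0 = 0`). -/
def sF (a k : ℕ) : ℕ := ∑ i ∈ Finset.range k, a ^ i

/-- `tF a b c k = a^k * c + b * sF a k`. -/
def tF (a b c k : ℕ) : ℕ := a ^ k * c + b * sF a k

/-- A θ_{a,b}-semigroup: contains 0, closed under addition, and closed under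
`x ↦ a*x + b` on nonzero elements. -/
def IsThetaSG (a b : ℕ) (S : Set ℕ) : Prop :=
  0 ∈ S ∧ (∀ x ∈ S, ∀ y ∈ S, x + y ∈ S) ∧ ∀ y ∈ S, y ≠ 0 → a * y + b ∈ S

/-- `Gset a b c` : the smallest θ_{a,b}-semigroup containing `c`. -/
def Gset (a b c : ℕ) : Set ℕ := ⋂₀ {S : Set ℕ | IsThetaSG a b S ∧ c ∈ S}

/-- `Hmon a b c` : additive submonoid generated by the `tF a b c k`. -/
def Hmon (a b c : ℕ) : AddSubmonoid ℕ :=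
  AddSubmonoid.closure {x | ∃ k, x = tF a b c k}

/-- `{j_i}_{i=1}^k` is `a`-reduced. -/
def AReduced (a k : ℕ) (j : ℕ → ℕ) : Prop :=
  (∀ i, 1 ≤ i → i ≤ k → j i ≤ a) ∧ j k ≠ 0 ∧
  ∀ m, 1 ≤ m → m ≤ k → j m = a → ∀ i, 1 ≤ i → i < m → j i = 0

lemma gset_mem_iff {a b c x : ℕ} :
    x ∈ Gset a b c ↔ ∀ S : Set ℕ, IsThetaSG a b S → c ∈ S → x ∈ S := by
  simp only [Gset, Set.mem_sInter, Set.mem_setOf_eq, and_imp]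

lemma gset_zero (a b c : ℕ) : (0 : ℕ) ∈ Gset a b c :=
  gset_mem_iff.2 fun _ hS _ => hS.1

lemma gset_c (a b c : ℕ) : c ∈ Gset a b c :=
  gset_mem_iff.2 fun _ _ h => h

lemma gset_add {a b c x y : ℕ} (hx : x ∈ Gset a b c) (hy : y ∈ Gset a b c) :
    x + y ∈ Gset a b c :=
  gset_mem_iff.2 fun S hS hc =>
    hS.2.1 x (gset_mem_iff.1 hx S hS hc) y (gset_mem_iff.1 hy S hS hc)

lemma gset_add_mul {a b c x : ℕ} (hx : x ∈ Gset a b c) (k : ℕ) :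
    x + k * c ∈ Gset a b c := by
  induction k with
  | zero => simpa using hx
  | succ k ih =>
      have := gset_add ih (gset_c a b c)
      have h : x + k * c + c = x + (k + 1) * c := by ring
      rwa [h] at this

lemma card_filter_mod (X c : ℕ) (hc : 0 < c) :
    ((Finset.range X).filter (fun n => n % c = X % c)).card = X / c := by
  have himg : (Finset.range X).filter (fun n => n % c = X % c)
      = (Finset.range (X / c)).image (fun j => j * c + X % c) := by
    ext n
    simp only [Finset.mem_filter, Finset.mem_range, Finset.mem_image]
    constructor
    · rintro ⟨h1, h2⟩
      refine ⟨n / c, ?_, by rw [← h2]; exact Nat.div_add_mod' n c⟩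
      have h3 : c ∣ X - n := (Nat.modEq_iff_dvd' h1.le).mp h2
      have h4 : n + c ≤ X := by
        rcases h3 with ⟨k, hk⟩
        rcases Nat.eq_zero_or_pos k with rfl | hk0
        · omega
        · have : c * 1 ≤ c * k := Nat.mul_le_mul_left c hk0
          omega
      calc n / c < n / c + 1 := Nat.lt_succ_self _
        _ = (n + c) / c := (Nat.add_div_right n hc).symm
        _ ≤ X / c := Nat.div_le_div_right h4
    · rintro ⟨j, hj, rfl⟩
      constructor
      · have h1 : (j + 1) * c ≤ (X / c) * c := Nat.mul_le_mul_right c hj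
        have h2 : (X / c) * c ≤ X := Nat.div_mul_le_self X c
        have h3 : X % c < c := Nat.mod_lt _ hc
        calc j * c + X % c < j * c + c := by omega
          _ = (j + 1) * c := by ring
          _ ≤ X := le_trans h1 h2
      · rw [add_comm, Nat.add_mul_mod_self_right, Nat.mod_mod_of_dvd X dvd_rfl]
  rw [himg, Finset.card_image_of_injective _
    (fun j1 j2 h => Nat.eq_of_mul_eq_mul_right hc (by omega : j1 * c = j2 * c)),
    Finset.card_range]

theorem stmt18 (a b c : ℕ) (ha : 0 < a) (hb : 0 < b) (hc : 2 ≤ c)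
    (hcop : Nat.gcd b c = 1) (x : ℕ → ℕ)
    (hx : ∀ l < c, IsLeast {y : ℕ | y ∈ Gset a b c ∧ y % c = (b * l) % c} (x l)) :
    2 * c * {n : ℕ | n ∉ Gset a b c}.ncard + c * (c - 1) =
      2 * ∑ l ∈ Finset.Icc 1 (c - 1), x l := by
  have hc0 : 0 < c := by omega
  haveI : NeZero c := ⟨by omega⟩
  have hcop' : Nat.Coprime b c := hcop
  -- x 0 = 0
  have hx0 : x 0 = 0 :=
    Nat.le_zero.mp ((hx 0 hc0).2 ⟨gset_zero a b c, by simp⟩)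
  -- the unit b in ZMod c
  obtain ⟨u, hu⟩ : IsUnit (b : ZMod c) := (ZMod.isUnit_iff_coprime b c).2 hcop'
  -- membership characterization in each residue class
  have key : ∀ l, l < c → ∀ n : ℕ, n % c = (b * l) % c →
      (n ∈ Gset a b c ↔ x l ≤ n) := by
    intro l hl n hn
    constructor
    · intro h; exact (hx l hl).2 ⟨h, hn⟩
    · intro h
      have hxl := (hx l hl).1
      have hmod : x l % c = n % c := hxl.2.trans hn.symm
      have hdvd : c ∣ n - x l := (Nat.modEq_iff_dvd' h).mp hmod
      rcases hdvd with ⟨k, hk⟩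
      have hn' : n = x l + c * k := by omega
      rw [hn', mul_comm c k]
      exact gset_add_mul hxl.1 k
  -- every residue class is hit
  have hsurj : ∀ n : ℕ, ∃ l, l < c ∧ (b * l) % c = n % c := by
    intro n
    refine ⟨((u⁻¹ : (ZMod c)ˣ) * (n : ZMod c)).val, ZMod.val_lt _, ?_⟩
    have hcast : ((b * ((u⁻¹ : (ZMod c)ˣ) * (n : ZMod c)).val : ℕ) : ZMod c)
        = (n : ZMod c) := by
      push_cast
      rw [ZMod.natCast_val, ZMod.cast_id, ← hu, ← mul_assoc, Units.mul_inv, one_mul]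
    exact (ZMod.natCast_eq_natCast_iff' _ _ _).1 hcast
  -- injectivity of l ↦ (b*l) % c on range c
  have hinj : ∀ l1, l1 < c → ∀ l2, l2 < c →
      (b * l1) % c = (b * l2) % c → l1 = l2 := by
    intro l1 h1 l2 h2 h
    have h' : ((b * l1 : ℕ) : ZMod c) = ((b * l2 : ℕ) : ZMod c) := by
      rw [ZMod.natCast_eq_natCast_iff']
      simpa using h
    push_cast at h'
    rw [← hu] at h'
    have h'' : (l1 : ZMod c) = (l2 : ZMod c) := (Units.mul_right_inj u).mp (by simpa using h')
    have := (ZMod.natCast_eq_natCast_iff' l1 l2 c).1 h''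
    rwa [Nat.mod_eq_of_lt h1, Nat.mod_eq_of_lt h2] at this
  -- the gap set as a finset
  set F : Finset ℕ := (Finset.range c).biUnion
    (fun l => (Finset.range (x l)).filter (fun n => n % c = (b * l) % c)) with hF
  have hFset : {n : ℕ | n ∉ Gset a b c} = ↑F := by
    ext n
    simp only [Set.mem_setOf_eq, hF, Finset.coe_biUnion, Set.mem_iUnion,
      Finset.mem_coe, Finset.mem_filter, Finset.mem_range]
    constructor
    · intro hn
      obtain ⟨l, hl, hlr⟩ := hsurj n
      refine ⟨l, hl, ?_, hlr.symm⟩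
      by_contra h
      exact hn ((key l hl n hlr.symm).2 (by omega))
    · rintro ⟨l, hl, hnx, hnr⟩ hn
      exact absurd ((key l hl n hnr).1 hn) (by omega)
  have hdisj : ∀ l1 ∈ Finset.range c, ∀ l2 ∈ Finset.range c, l1 ≠ l2 →
      Disjoint ((Finset.range (x l1)).filter (fun n => n % c = (b * l1) % c))
        ((Finset.range (x l2)).filter (fun n => n % c = (b * l2) % c)) := by
    intro l1 h1 l2 h2 hne
    simp only [Finset.mem_range] at h1 h2
    rw [Finset.disjoint_left]
    intro n hn1 hn2
    simp only [Finset.mem_filter, Finset.mem_range] at hn1 hn2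
    exact hne (hinj l1 h1 l2 h2 (hn1.2.symm.trans hn2.2))
  have hgenus : {n : ℕ | n ∉ Gset a b c}.ncard = ∑ l ∈ Finset.range c, x l / c := by
    rw [hFset, Set.ncard_coe_finset, hF, Finset.card_biUnion hdisj]
    refine Finset.sum_congr rfl fun l hl => ?_
    rw [Finset.mem_range] at hl
    have hm : (b * l) % c = x l % c := ((hx l hl).1.2).symm
    have hfe : (Finset.range (x l)).filter (fun n => n % c = (b * l) % c)
        = (Finset.range (x l)).filter (fun n => n % c = x l % c) := by
      apply Finset.filter_congr
      intro n _
      simp [hm]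
    rw [hfe]
    exact card_filter_mod (x l) c hc0
  -- c * genus + Σ residues = Σ x l
  have hmain : c * ∑ l ∈ Finset.range c, x l / c + ∑ l ∈ Finset.range c, (b * l) % c
      = ∑ l ∈ Finset.range c, x l := by
    rw [Finset.mul_sum, ← Finset.sum_add_distrib]
    refine Finset.sum_congr rfl fun l hl => ?_
    rw [Finset.mem_range] at hl
    have hm : x l % c = (b * l) % c := (hx l hl).1.2
    rw [← hm]
    exact Nat.div_add_mod (x l) c
  -- Σ residues = Σ l
  have himg : (Finset.range c).image (fun l => (b * l) % c) = Finset.range c := by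
    apply Finset.eq_of_subset_of_card_le
    · intro m hm
      simp only [Finset.mem_image, Finset.mem_range] at hm ⊢
      obtain ⟨l, _, rfl⟩ := hm
      exact Nat.mod_lt _ hc0
    · rw [Finset.card_image_of_injOn, Finset.card_range]
      intro l1 h1 l2 h2 h
      simp only [Finset.mem_coe, Finset.mem_range] at h1 h2
      exact hinj l1 h1 l2 h2 h
  have hres : ∑ l ∈ Finset.range c, (b * l) % c = ∑ m ∈ Finset.range c, m := by
    conv_rhs => rw [← himg]
    rw [Finset.sum_image]
    intro l1 h1 l2 h2 h
    simp only [Finset.mem_coe, Finset.mem_range] at h1 h2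
    exact hinj l1 h1 l2 h2 h
  have htri : (∑ m ∈ Finset.range c, m) * 2 = c * (c - 1) :=
    Finset.sum_range_id_mul_two c
  -- Σ_{l<c} x l = Σ_{Icc 1 (c-1)} x l
  have hsplit : ∑ l ∈ Finset.range c, x l = ∑ l ∈ Finset.Icc 1 (c - 1), x l := by
    have h2 : Finset.Icc 1 (c - 1) = Finset.Ico 1 c := by
      ext m
      simp only [Finset.mem_Icc, Finset.mem_Ico]
      omega
    rw [Finset.range_eq_Ico, Finset.sum_eq_sum_Ico_succ_bot hc0 x, hx0, zero_add, h2]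
  -- finish
  rw [hgenus]
  set G := ∑ l ∈ Finset.range c, x l / c
  set R := ∑ l ∈ Finset.range c, (b * l) % c
  set T := ∑ l ∈ Finset.Icc 1 (c - 1), x l
  have e1 : c * G + R = T := by rw [hmain, hsplit]
  have e2 : R * 2 = c * (c - 1) := by rw [hres]; exact htri
  have e3 : 2 * c * G = 2 * (c * G) := by ring
  omega
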